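/- Let (Ω₁, μ₁) and (Ω₂, μ₂) be probability spaces, and let e : Ω₁ × Ω₂ → ℝ be bounded measurable with e ≥ ε for some ε > 0. For bounded measurable u define M u = ∫∫ u dμ₁ dμ₂, (M^ξ u)(ω₂) = ∫ u(ω₁, ω₂) dμ₁(ω₁), e_* = e/∫ e(·, ω₂) dμ₁, P u = (M^ξ u)·e_*, Q u = u − P u, P₁ u = P(P u − M^ξ(P u) + M(P u)), and Q₁ u = P(M^ξ(P u) − M(P u)). Then for every bounded measurable u: (a) P₁ u + Q₁ u + Q u = u, with the pointwise form u = (M u)·e_* + ((M^ξ u) − M u)·e_* + (u − (M^ξ u)·e_*); (b) each of P₁, Q₁, Q is idempotent; and (c) every pairwise composition among P₁, Q₁, Q in either order is zero: P₁(Q₁ u) = Q₁(P₁ u) = P₁(Q u) = Q(P₁ u) = Q₁(Q u) = Q(Q₁ u) = 0. -/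

import Mathlib

open MeasureTheory

/-- The decomposition of unity by the triad P₁ = P(I − M^ξ + M)P, Q₁ = P(M^ξ − M)P,
Q = I − P: they sum to the identity, are idempotent, and have pairwise zero products. -/
theorem stmt_16 {Ω₁ Ω₂ : Type*} [MeasurableSpace Ω₁] [MeasurableSpace Ω₂]
    (μ₁ : Measure Ω₁) (μ₂ : Measure Ω₂)
    [IsProbabilityMeasure μ₁] [IsProbabilityMeasure μ₂]
    (e : Ω₁ × Ω₂ → ℝ) (hemeas : Measurable e)
    (ε : ℝ) (hε : 0 < ε) (heε : ∀ x, ε ≤ e x)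
    (Ce : ℝ) (heC : ∀ x, e x ≤ Ce)
    (u : Ω₁ × Ω₂ → ℝ) (humeas : Measurable u)
    (Cu : ℝ) (huC : ∀ x, |u x| ≤ Cu) :
    let Mxi : (Ω₁ × Ω₂ → ℝ) → Ω₂ → ℝ := fun f ω₂ => ∫ ω₁, f (ω₁, ω₂) ∂μ₁
    let M : (Ω₁ × Ω₂ → ℝ) → ℝ := fun f => ∫ ω₂, Mxi f ω₂ ∂μ₂
    let estar : Ω₁ × Ω₂ → ℝ := fun x => e x / Mxi e x.2
    let P : (Ω₁ × Ω₂ → ℝ) → Ω₁ × Ω₂ → ℝ := fun f x => Mxi f x.2 * estar x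
    let Q : (Ω₁ × Ω₂ → ℝ) → Ω₁ × Ω₂ → ℝ := fun f x => f x - P f x
    let P₁ : (Ω₁ × Ω₂ → ℝ) → Ω₁ × Ω₂ → ℝ :=
      fun f => P (fun x => P f x - Mxi (P f) x.2 + M (P f))
    let Q₁ : (Ω₁ × Ω₂ → ℝ) → Ω₁ × Ω₂ → ℝ :=
      fun f => P (fun x => Mxi (P f) x.2 - M (P f))
    -- (a) decomposition of unity and its pointwise form
    ((∀ x, P₁ u x + Q₁ u x + Q u x = u x) ∧
      (∀ x, u x = M u * estar x + (Mxi u x.2 - M u) * estar x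
        + (u x - Mxi u x.2 * estar x))) ∧
    -- (b) idempotency
    ((∀ x, P₁ (P₁ u) x = P₁ u x) ∧ (∀ x, Q₁ (Q₁ u) x = Q₁ u x) ∧
      (∀ x, Q (Q u) x = Q u x)) ∧
    -- (c) pairwise products vanish
    ((∀ x, P₁ (Q₁ u) x = 0) ∧ (∀ x, Q₁ (P₁ u) x = 0) ∧
      (∀ x, P₁ (Q u) x = 0) ∧ (∀ x, Q (P₁ u) x = 0) ∧
      (∀ x, Q₁ (Q u) x = 0) ∧ (∀ x, Q (Q₁ u) x = 0)) := by
  intro Mxi M estar P Q P₁ Q₁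
  -- integrability of slices of e
  have heint : ∀ ω₂, Integrable (fun ω₁ => e (ω₁, ω₂)) μ₁ := by
    intro ω₂
    refine Integrable.mono' (integrable_const Ce)
      ((hemeas.comp measurable_prodMk_right).aestronglyMeasurable) ?_
    filter_upwards with ω₁
    rw [Real.norm_eq_abs, abs_of_pos (lt_of_lt_of_le hε (heε _))]
    exact heC _
  have huint : ∀ ω₂, Integrable (fun ω₁ => u (ω₁, ω₂)) μ₁ := by
    intro ω₂
    refine Integrable.mono' (integrable_const Cu)
      ((humeas.comp measurable_prodMk_right).aestronglyMeasurable) ?_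
    filter_upwards with ω₁
    rw [Real.norm_eq_abs]
    exact huC _
  have hc : ∀ ω₂, 0 < Mxi e ω₂ := by
    intro ω₂
    have h := integral_mono (integrable_const ε) (heint ω₂) (fun ω₁ => heε (ω₁, ω₂))
    simp only [integral_const, probReal_univ, one_smul] at h
    exact lt_of_lt_of_le hε h
  -- the fast average of estar is 1
  have hA : ∀ ω₂, (∫ ω₁, estar (ω₁, ω₂) ∂μ₁) = 1 := by
    intro ω₂
    show (∫ ω₁, e (ω₁, ω₂) / Mxi e ω₂ ∂μ₁) = 1
    rw [integral_div]
    exact div_self (hc ω₂).ne'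
  have hB : ∀ ω₂, Integrable (fun ω₁ => estar (ω₁, ω₂)) μ₁ := by
    intro ω₂
    show Integrable (fun ω₁ => e (ω₁, ω₂) / Mxi e ω₂) μ₁
    exact (heint ω₂).div_const _
  -- Mξ (P f) = Mξ f and M (P f) = M f
  have hPint : ∀ (f : Ω₁ × Ω₂ → ℝ) ω₂, Mxi (P f) ω₂ = Mxi f ω₂ := by
    intro f ω₂
    show (∫ ω₁, Mxi f ω₂ * estar (ω₁, ω₂) ∂μ₁) = Mxi f ω₂
    rw [integral_const_mul, hA ω₂, mul_one]
  have hD : ∀ (f : Ω₁ × Ω₂ → ℝ), M (P f) = M f := by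
    intro f
    show (∫ ω₂, Mxi (P f) ω₂ ∂μ₂) = M f
    simp only [hPint f]
    rfl
  -- Mξ of the P₁-core is M f
  have hMg : ∀ (f : Ω₁ × Ω₂ → ℝ) ω₂,
      Mxi (fun x => P f x - Mxi (P f) x.2 + M (P f)) ω₂ = M f := by
    intro f ω₂
    have h1 : Integrable (fun ω₁ => Mxi f ω₂ * estar (ω₁, ω₂)) μ₁ := (hB ω₂).const_mul _
    show (∫ ω₁, (Mxi f ω₂ * estar (ω₁, ω₂) - Mxi (P f) ω₂ + M (P f)) ∂μ₁) = M f
    simp only [hPint f ω₂, hD f]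
    have h2 : Integrable (fun ω₁ => Mxi f ω₂ * estar (ω₁, ω₂) - Mxi f ω₂) μ₁ :=
      h1.sub (integrable_const _)
    rw [integral_add h2 (integrable_const (M f)),
      integral_sub h1 (integrable_const _), integral_const_mul, hA ω₂, integral_const,
      integral_const]
    simp
  -- Mξ of the Q₁-core
  have hQ₁M : ∀ (f : Ω₁ × Ω₂ → ℝ) ω₂,
      Mxi (fun x => Mxi (P f) x.2 - M (P f)) ω₂ = Mxi f ω₂ - M f := by
    intro f ω₂
    show (∫ ω₁, (Mxi (P f) ω₂ - M (P f)) ∂μ₁) = Mxi f ω₂ - M f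
    rw [integral_const]
    simp [hPint f ω₂, hD f]
  -- closed forms for P₁ and Q₁
  have hP₁ : ∀ (f : Ω₁ × Ω₂ → ℝ) x, P₁ f x = M f * estar x := by
    intro f x
    show Mxi (fun x => P f x - Mxi (P f) x.2 + M (P f)) x.2 * estar x = M f * estar x
    rw [hMg f x.2]
  have hQ₁c : ∀ (f : Ω₁ × Ω₂ → ℝ) x, Q₁ f x = (Mxi f x.2 - M f) * estar x := by
    intro f x
    show Mxi (fun x => Mxi (P f) x.2 - M (P f)) x.2 * estar x = (Mxi f x.2 - M f) * estar x
    rw [hQ₁M f x.2]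
  -- Mξ and M of the composite operators
  have hMxiP₁ : ∀ (f : Ω₁ × Ω₂ → ℝ) ω₂, Mxi (P₁ f) ω₂ = M f := by
    intro f ω₂
    have := (hPint (fun x => P f x - Mxi (P f) x.2 + M (P f)) ω₂).trans (hMg f ω₂)
    exact this
  have hMxiQ₁ : ∀ (f : Ω₁ × Ω₂ → ℝ) ω₂, Mxi (Q₁ f) ω₂ = Mxi f ω₂ - M f := by
    intro f ω₂
    exact (hPint (fun x => Mxi (P f) x.2 - M (P f)) ω₂).trans (hQ₁M f ω₂)
  have hMP₁ : ∀ (f : Ω₁ × Ω₂ → ℝ), M (P₁ f) = M f := by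
    intro f
    show (∫ ω₂, Mxi (P₁ f) ω₂ ∂μ₂) = M f
    simp only [hMxiP₁ f]
    simp
  have hvint : Integrable (fun ω₂ => Mxi u ω₂) μ₂ := by
    refine Integrable.mono' (integrable_const Cu)
      (humeas.stronglyMeasurable.integral_prod_left'.aestronglyMeasurable) ?_
    filter_upwards with ω₂
    calc ‖∫ ω₁, u (ω₁, ω₂) ∂μ₁‖ ≤ Cu * (μ₁ Set.univ).toReal :=
          norm_integral_le_of_norm_le_const (by filter_upwards with ω₁; exact huC _)
      _ = Cu := by simp
  have hMQ₁ : M (Q₁ u) = 0 := by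
    show (∫ ω₂, Mxi (Q₁ u) ω₂ ∂μ₂) = 0
    simp only [hMxiQ₁ u]
    rw [integral_sub hvint (integrable_const _), integral_const]
    simp only [probReal_univ, one_smul]
    exact sub_self _
  have hMxiQ : ∀ ω₂, Mxi (Q u) ω₂ = 0 := by
    intro ω₂
    show (∫ ω₁, (u (ω₁, ω₂) - Mxi u ω₂ * estar (ω₁, ω₂)) ∂μ₁) = 0
    rw [integral_sub (huint ω₂) ((hB ω₂).const_mul _), integral_const_mul, hA ω₂, mul_one]
    exact sub_self _
  have hMQ : M (Q u) = 0 := by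
    show (∫ ω₂, Mxi (Q u) ω₂ ∂μ₂) = 0
    simp only [hMxiQ]
    simp
  refine ⟨⟨?_, ?_⟩, ⟨?_, ?_, ?_⟩, ?_, ?_, ?_, ?_, ?_, ?_⟩
  · intro x
    rw [hP₁ u x, hQ₁c u x]
    show M u * estar x + (Mxi u x.2 - M u) * estar x + (u x - Mxi u x.2 * estar x) = u x
    ring
  · intro x
    ring
  · intro x
    rw [hP₁ (P₁ u) x, hP₁ u x, hMP₁ u]
  · intro x
    rw [hQ₁c (Q₁ u) x, hQ₁c u x, hMxiQ₁ u x.2, hMQ₁, sub_zero]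
  · intro x
    show Q u x - Mxi (Q u) x.2 * estar x = Q u x
    rw [hMxiQ x.2, zero_mul, sub_zero]
  · intro x
    rw [hP₁ (Q₁ u) x, hMQ₁, zero_mul]
  · intro x
    rw [hQ₁c (P₁ u) x, hMxiP₁ u x.2, hMP₁ u, sub_self, zero_mul]
  · intro x
    rw [hP₁ (Q u) x, hMQ, zero_mul]
  · intro x
    show P₁ u x - Mxi (P₁ u) x.2 * estar x = 0
    rw [hP₁ u x, hMxiP₁ u x.2]
    exact sub_self _
  · intro x
    rw [hQ₁c (Q u) x, hMxiQ x.2, hMQ, sub_zero, zero_mul]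
  · intro x
    show Q₁ u x - Mxi (Q₁ u) x.2 * estar x = 0
    rw [hQ₁c u x, hMxiQ₁ u x.2]
    exact sub_self _
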